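/- Every n×n unitary matrix U can be written as U = O₁ D O₂, where O₁, O₂ are real orthogonal n×n matrices and D is a diagonal unitary matrix with entries e^{iθ_l} for θ_l ∈ [0, π). -/

import Mathlib

open Matrix

noncomputable section ODOaux

lemma odo_joint_spectral {n : ℕ} (X Y : Matrix (Fin n) (Fin n) ℝ) (hX : Xᴴ = X) (hY : Yᴴ = Y)
    (hXY : X * Y = Y * X) :
    ∃ (O : Matrix (Fin n) (Fin n) ℝ) (p q : Fin n → ℝ),
      Oᵀ * O = 1 ∧ X * O = O * Matrix.diagonal p ∧ Y * O = O * Matrix.diagonal q := by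
  classical
  have hA : (Matrix.toEuclideanLin X).IsSymmetric :=
    Matrix.isHermitian_iff_isSymmetric.1 hX
  have hB : (Matrix.toEuclideanLin Y).IsSymmetric :=
    Matrix.isHermitian_iff_isSymmetric.1 hY
  have hcomm : Commute (Matrix.toEuclideanLin X) (Matrix.toEuclideanLin Y) := by
    show _ = _
    ext v i
    simp [Module.End.mul_apply, Matrix.toEuclideanLin_apply, Matrix.mulVec_mulVec, hXY]
  set V : ℝ × ℝ → Submodule ℝ (EuclideanSpace ℝ (Fin n)) := fun i =>
    Module.End.eigenspace (Matrix.toEuclideanLin X) i.2 ⊓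
      Module.End.eigenspace (Matrix.toEuclideanLin Y) i.1 with hVdef
  have internal : DirectSum.IsInternal V := hA.directSum_isInternal_of_commute hB hcomm
  have hV' : OrthogonalFamily ℝ (fun i => V i) fun i => (V i).subtypeₗᵢ :=
    LinearMap.IsSymmetric.orthogonalFamily_eigenspace_inf_eigenspace hA hB
  have hind : iSupIndep V := hV'.independent
  letI : Fintype {i // V i ≠ ⊥} := hind.fintypeNeBotOfFiniteDimensional
  have hV'' : OrthogonalFamily ℝ (fun i : {i // V i ≠ ⊥} => V i.1)
      (fun i => (V i.1).subtypeₗᵢ) := fun i j hij => hV' (Subtype.coe_injective.ne hij)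
  have hint' : DirectSum.IsInternal (fun i : {i // V i ≠ ⊥} => V i.1) := by
    rw [DirectSum.isInternal_submodule_iff_iSupIndep_and_iSup_eq_top]
    refine ⟨hind.comp Subtype.coe_injective, ?_⟩
    apply le_antisymm le_top
    rw [← internal.submodule_iSup_eq_top]
    apply iSup_le fun i => ?_
    by_cases h : V i = ⊥
    · simp [h]
    · exact le_iSup_of_le ⟨i, h⟩ le_rfl
  have hn : Module.finrank ℝ (EuclideanSpace ℝ (Fin n)) = n := finrank_euclideanSpace_fin
  set b := hint'.subordinateOrthonormalBasis hn hV'' with hbdef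
  set idx := fun a => hint'.subordinateOrthonormalBasisIndex hn a hV'' with hidxdef
  have hmem : ∀ a, b a ∈ V (idx a).1 :=
    fun a => hint'.subordinateOrthonormalBasis_subordinate hn a hV''
  set p : Fin n → ℝ := fun a => ((idx a).1).2 with hpdef
  set q : Fin n → ℝ := fun a => ((idx a).1).1 with hqdef
  set O := (EuclideanSpace.basisFun (Fin n) ℝ).toBasis.toMatrix b.toBasis with hOdef
  have hOapp : ∀ i j, O i j = b j i := fun i j => rfl
  have hOunit : O ∈ Matrix.unitaryGroup (Fin n) ℝ :=
    (EuclideanSpace.basisFun (Fin n) ℝ).toMatrix_orthonormalBasis_mem_unitary b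
  have hO : Oᵀ * O = 1 := by
    have h1 := hOunit.1
    have : star O = Oᵀ := by
      ext i j
      simp [Matrix.star_apply]
    rwa [this] at h1
  have hXb : ∀ a, X *ᵥ ⇑(b a) = p a • ⇑(b a) := by
    intro a
    have h := Module.End.mem_eigenspace_iff.mp (hmem a).1
    simpa [Matrix.toEuclideanLin_apply] using congr(⇑$h)
  have hYb : ∀ a, Y *ᵥ ⇑(b a) = q a • ⇑(b a) := by
    intro a
    have h := Module.End.mem_eigenspace_iff.mp (hmem a).2
    simpa [Matrix.toEuclideanLin_apply] using congr(⇑$h)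
  refine ⟨O, p, q, hO, ?_, ?_⟩
  · ext i j
    have := congrFun (hXb j) i
    simp only [Matrix.mulVec, dotProduct, Pi.smul_apply, smul_eq_mul] at this
    simp only [Matrix.mul_apply, Matrix.mul_diagonal, hOapp]
    rw [this, mul_comm]
    simp [Matrix.diagonal_apply, mul_ite]
  · ext i j
    have := congrFun (hYb j) i
    simp only [Matrix.mulVec, dotProduct, Pi.smul_apply, smul_eq_mul] at this
    simp only [Matrix.mul_apply, Matrix.mul_diagonal, hOapp]
    rw [this, mul_comm]
    simp [Matrix.diagonal_apply, mul_ite]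

end ODOaux

section ODOmain

variable {n : ℕ}

lemma odo_map_mul (A B : Matrix (Fin n) (Fin n) ℝ) :
    (A * B).map Complex.ofReal = A.map Complex.ofReal * B.map Complex.ofReal := by
  ext i j
  simp [Matrix.map_apply, Matrix.mul_apply]

lemma odo_map_one : (1 : Matrix (Fin n) (Fin n) ℝ).map Complex.ofReal = 1 := by
  ext i j
  simp [Matrix.map_apply, Matrix.one_apply, apply_ite]

lemma odo_map_injective (A B : Matrix (Fin n) (Fin n) ℝ)
    (h : A.map Complex.ofReal = B.map Complex.ofReal) : A = B := by
  ext i j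
  have := congrFun (congrFun h i) j
  simp only [Matrix.map_apply] at this
  exact_mod_cast this

lemma odo_map_inj {M N M' N' : Matrix (Fin n) (Fin n) ℝ}
    (h : M.map Complex.ofReal + Complex.I • N.map Complex.ofReal
       = M'.map Complex.ofReal + Complex.I • N'.map Complex.ofReal) : M = M' ∧ N = N' := by
  have key : ∀ i j, (M i j : ℂ) + Complex.I * N i j = (M' i j : ℂ) + Complex.I * N' i j := by
    intro i j
    have := congrFun (congrFun h i) j
    simpa [Matrix.add_apply, Matrix.smul_apply, Matrix.map_apply] using this
  constructor <;> ext i j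
  · have := key i j
    rw [Complex.ext_iff] at this
    simpa using this.1
  · have := key i j
    rw [Complex.ext_iff] at this
    simpa using this.2

lemma odo_map_add (A B : Matrix (Fin n) (Fin n) ℝ) :
    (A + B).map Complex.ofReal = A.map Complex.ofReal + B.map Complex.ofReal := by
  ext i j; simp [Matrix.map_apply]

lemma odo_map_sub (A B : Matrix (Fin n) (Fin n) ℝ) :
    (A - B).map Complex.ofReal = A.map Complex.ofReal - B.map Complex.ofReal := by
  ext i j; simp [Matrix.map_apply]

lemma odo_map_zero : (0 : Matrix (Fin n) (Fin n) ℝ).map Complex.ofReal = 0 := by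
  ext i j; simp

lemma odo_map_conjTranspose (A : Matrix (Fin n) (Fin n) ℝ) :
    (A.map Complex.ofReal)ᴴ = Aᵀ.map Complex.ofReal := by
  ext i j
  simp [Matrix.conjTranspose_apply, Matrix.map_apply]

end ODOmain

theorem odo_decomposition (n : ℕ) (U : Matrix (Fin n) (Fin n) ℂ)
    (hU : Uᴴ * U = 1) :
    ∃ (O₁ O₂ : Matrix (Fin n) (Fin n) ℝ) (θ : Fin n → ℝ),
      O₁ᵀ * O₁ = 1 ∧ O₂ᵀ * O₂ = 1 ∧
      (∀ l, θ l ∈ Set.Ico 0 Real.pi) ∧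
      U = (O₁.map (Complex.ofReal)) *
          Matrix.diagonal (fun l => Complex.exp (Complex.I * (θ l : ℂ))) *
          (O₂.map (Complex.ofReal)) := by
  classical
  have hU' : U * Uᴴ = 1 := mul_eq_one_comm.mp hU
  set S : Matrix (Fin n) (Fin n) ℂ := U * Uᵀ with hSdef
  have hSsymm : Sᵀ = S := by rw [hSdef, Matrix.transpose_mul, Matrix.transpose_transpose]
  have hprod : Sᴴ * S = 1 := by
    rw [hSdef, Matrix.conjTranspose_mul, mul_assoc, ← mul_assoc Uᴴ, hU, one_mul]
    have h1 : (Uᵀ)ᴴ = (Uᴴ)ᵀ := by ext i j; simp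
    rw [h1, ← Matrix.transpose_mul, hU', Matrix.transpose_one]
  set X : Matrix (Fin n) (Fin n) ℝ := S.map Complex.re with hXdef
  set Y : Matrix (Fin n) (Fin n) ℝ := S.map Complex.im with hYdef
  have hdecomp : S = X.map Complex.ofReal + Complex.I • Y.map Complex.ofReal := by
    ext i j
    simp only [Matrix.add_apply, Matrix.smul_apply, Matrix.map_apply, hXdef, hYdef,
      smul_eq_mul]
    rw [mul_comm]
    exact (Complex.re_add_im _).symm
  have hconj : Sᴴ = X.map Complex.ofReal - Complex.I • Y.map Complex.ofReal := by
    ext i j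
    have hs : S j i = S i j := (congrFun (congrFun hSsymm j) i).symm
    simp only [Matrix.conjTranspose_apply, Matrix.sub_apply, Matrix.smul_apply,
      Matrix.map_apply, hXdef, hYdef, smul_eq_mul, hs]
    rw [Complex.ext_iff]
    simp
  have hexp : (X * X + Y * Y).map Complex.ofReal
      + Complex.I • ((X * Y - Y * X).map Complex.ofReal)
      = (1 : Matrix (Fin n) (Fin n) ℝ).map Complex.ofReal
      + Complex.I • ((0 : Matrix (Fin n) (Fin n) ℝ).map Complex.ofReal) := by
    have expand : (X.map Complex.ofReal - Complex.I • Y.map Complex.ofReal)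
        * (X.map Complex.ofReal + Complex.I • Y.map Complex.ofReal)
        = (X * X + Y * Y).map Complex.ofReal
          + Complex.I • ((X * Y - Y * X).map Complex.ofReal) := by
      simp only [odo_map_add, odo_map_sub, odo_map_mul, sub_mul, mul_add, Matrix.mul_smul,
        Matrix.smul_mul, smul_smul, Complex.I_mul_I, neg_smul, one_smul, smul_sub]
      abel
    rw [← expand, ← hconj, ← hdecomp, hprod, odo_map_one, odo_map_zero, smul_zero, add_zero]
  obtain ⟨hunit2, hcomm2⟩ := odo_map_inj hexp
  have hcomm3 : X * Y = Y * X := sub_eq_zero.mp hcomm2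
  have hs : ∀ i j, S j i = S i j := fun i j => (congrFun (congrFun hSsymm j) i).symm
  have hXsym : Xᴴ = X := by
    ext i j
    simp only [Matrix.conjTranspose_apply, Matrix.map_apply, hXdef, star_trivial]
    rw [hs i j]
  have hYsym : Yᴴ = Y := by
    ext i j
    simp only [Matrix.conjTranspose_apply, Matrix.map_apply, hYdef, star_trivial]
    rw [hs i j]
  obtain ⟨O, p, q, hO, hXO, hYO⟩ := odo_joint_spectral X Y hXsym hYsym hcomm3
  have hO' : O * Oᵀ = 1 := mul_eq_one_comm.mp hO
  have hDD1 : (X * X + Y * Y) * O = O * Matrix.diagonal (fun j => p j * p j + q j * q j) := by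
    rw [add_mul, mul_assoc X X O, hXO, ← mul_assoc X O, hXO, mul_assoc,
      Matrix.diagonal_mul_diagonal, mul_assoc Y Y O, hYO, ← mul_assoc Y O, hYO, mul_assoc,
      Matrix.diagonal_mul_diagonal, ← Matrix.mul_add, ← Matrix.diagonal_add]
  rw [hunit2, one_mul] at hDD1
  have hdiagone : Matrix.diagonal (fun j => p j * p j + q j * q j)
      = (1 : Matrix (Fin n) (Fin n) ℝ) := by
    calc Matrix.diagonal (fun j => p j * p j + q j * q j)
        = 1 * Matrix.diagonal (fun j => p j * p j + q j * q j) := (one_mul _).symm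
      _ = (Oᵀ * O) * Matrix.diagonal (fun j => p j * p j + q j * q j) := by rw [hO]
      _ = Oᵀ * (O * Matrix.diagonal (fun j => p j * p j + q j * q j)) := by rw [mul_assoc]
      _ = Oᵀ * O := by rw [← hDD1]
      _ = 1 := hO
  have hpq : ∀ j, p j * p j + q j * q j = 1 := by
    intro j
    have := congrFun (congrFun hdiagone j) j
    simpa [Matrix.diagonal_apply_eq, Matrix.one_apply_eq] using this
  set lam : Fin n → ℂ := fun j => (p j : ℂ) + (q j : ℂ) * Complex.I with hlam
  have habs : ∀ j, ‖lam j‖ = 1 := by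
    intro j
    rw [hlam]
    simp only [Complex.norm_def, Complex.normSq_add_mul_I]
    rw [show p j ^ 2 + q j ^ 2 = 1 by nlinarith [hpq j]]
    exact Real.sqrt_one
  set θ : Fin n → ℝ := fun j =>
    if 0 ≤ (lam j).arg then (lam j).arg / 2 else (lam j).arg / 2 + Real.pi with hθ
  have hθmem : ∀ l, θ l ∈ Set.Ico 0 Real.pi := by
    intro l
    have h1 := Complex.arg_le_pi (lam l)
    have h2 := Complex.neg_pi_lt_arg (lam l)
    have hπ := Real.pi_pos
    simp only [hθ, Set.mem_Ico]
    split_ifs with h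
    · constructor <;> linarith
    · push_neg at h
      constructor <;> linarith
  have hexp2 : ∀ j, Complex.exp (Complex.I * (θ j : ℂ)) * Complex.exp (Complex.I * (θ j : ℂ))
      = lam j := by
    intro j
    have base : Complex.exp ((lam j).arg * Complex.I) = lam j := by
      have := Complex.norm_mul_exp_arg_mul_I (lam j)
      rwa [habs j, Complex.ofReal_one, one_mul] at this
    rw [← Complex.exp_add]
    simp only [hθ]
    split_ifs with h
    · rw [show Complex.I * (((lam j).arg / 2 : ℝ) : ℂ) + Complex.I * (((lam j).arg / 2 : ℝ) : ℂ)
          = ((lam j).arg : ℂ) * Complex.I by push_cast; ring]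
      exact base
    · rw [show Complex.I * (((lam j).arg / 2 + Real.pi : ℝ) : ℂ)
            + Complex.I * (((lam j).arg / 2 + Real.pi : ℝ) : ℂ)
          = ((lam j).arg : ℂ) * Complex.I + 2 * (Real.pi : ℂ) * Complex.I by push_cast; ring]
      rw [Complex.exp_add, base, Complex.exp_two_pi_mul_I, mul_one]
  set φO : Matrix (Fin n) (Fin n) ℂ := O.map Complex.ofReal with hφO
  have hφOT : φOᵀ = Oᵀ.map Complex.ofReal := by rw [hφO, Matrix.transpose_map]
  have hO1 : φOᵀ * φO = 1 := by rw [hφOT, hφO, ← odo_map_mul, hO, odo_map_one]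
  have hO2 : φO * φOᵀ = 1 := by rw [hφOT, hφO, ← odo_map_mul, hO', odo_map_one]
  set D : Matrix (Fin n) (Fin n) ℂ :=
    Matrix.diagonal (fun l => Complex.exp (Complex.I * (θ l : ℂ))) with hD
  have hDconj : ∀ l, (starRingEnd ℂ) (Complex.exp (Complex.I * (θ l : ℂ)))
      * Complex.exp (Complex.I * (θ l : ℂ)) = 1 := by
    intro l
    rw [← Complex.exp_conj, ← Complex.exp_add, _root_.map_mul, Complex.conj_I, Complex.conj_ofReal,
      show -Complex.I * (θ l : ℂ) + Complex.I * (θ l : ℂ) = 0 by ring, Complex.exp_zero]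
  have hDH : Dᴴ = Matrix.diagonal (fun l => (starRingEnd ℂ)
      (Complex.exp (Complex.I * (θ l : ℂ)))) := Matrix.diagonal_conjTranspose _
  have hDHD : Dᴴ * D = 1 := by
    rw [hDH, hD, Matrix.diagonal_mul_diagonal]
    rw [show (fun i => (starRingEnd ℂ) (Complex.exp (Complex.I * (θ i : ℂ)))
        * Complex.exp (Complex.I * (θ i : ℂ))) = fun _ => (1 : ℂ) from funext hDconj]
    exact Matrix.diagonal_one
  have hDDH : D * Dᴴ = 1 := mul_eq_one_comm.mp hDHD
  set T : Matrix (Fin n) (Fin n) ℂ := φO * D * φOᵀ with hT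
  have hTsymm : Tᵀ = T := by
    rw [hT, Matrix.transpose_mul, Matrix.transpose_mul, Matrix.transpose_transpose, hD,
      Matrix.diagonal_transpose, mul_assoc]
  have hTH : Tᴴ = φO * Dᴴ * φOᵀ := by
    rw [hT, Matrix.conjTranspose_mul, Matrix.conjTranspose_mul]
    have h1 : (φOᵀ)ᴴ = φO := by
      rw [hφOT, odo_map_conjTranspose, Matrix.transpose_transpose, hφO]
    have h2 : φOᴴ = φOᵀ := by rw [hφO, odo_map_conjTranspose, ← Matrix.transpose_map]
    rw [h1, h2, ← mul_assoc]
  have hTHT : Tᴴ * T = 1 := by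
    rw [hTH, hT]
    calc φO * Dᴴ * φOᵀ * (φO * D * φOᵀ)
        = φO * Dᴴ * (φOᵀ * φO) * D * φOᵀ := by
          simp only [mul_assoc]
      _ = φO * (Dᴴ * D) * φOᵀ := by rw [hO1]; simp only [mul_one, mul_assoc]
      _ = 1 := by rw [hDHD, mul_one, hO2]
  have hTTH : T * Tᴴ = 1 := mul_eq_one_comm.mp hTHT
  have hX2 : X = O * Matrix.diagonal p * Oᵀ := by
    calc X = X * (O * Oᵀ) := by rw [hO', mul_one]
      _ = (X * O) * Oᵀ := by rw [mul_assoc]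
      _ = O * Matrix.diagonal p * Oᵀ := by rw [hXO]
  have hY2 : Y = O * Matrix.diagonal q * Oᵀ := by
    calc Y = Y * (O * Oᵀ) := by rw [hO', mul_one]
      _ = (Y * O) * Oᵀ := by rw [mul_assoc]
      _ = O * Matrix.diagonal q * Oᵀ := by rw [hYO]
  have hmid : Matrix.diagonal lam = (Matrix.diagonal p).map Complex.ofReal
      + Complex.I • (Matrix.diagonal q).map Complex.ofReal := by
    ext i j
    by_cases h : i = j
    · subst h
      simp only [Matrix.add_apply, Matrix.smul_apply, Matrix.map_apply,
        Matrix.diagonal_apply_eq, hlam, smul_eq_mul]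
      ring
    · simp [Matrix.diagonal_apply_ne _ h, h]
  have hTT : T * T = S := by
    have step1 : T * T = φO * (D * D) * φOᵀ := by
      rw [hT]
      calc φO * D * φOᵀ * (φO * D * φOᵀ)
          = φO * D * (φOᵀ * φO) * D * φOᵀ := by simp only [mul_assoc]
        _ = φO * (D * D) * φOᵀ := by rw [hO1]; simp only [mul_one, mul_assoc]
    have step2 : D * D = Matrix.diagonal lam := by
      rw [hD, Matrix.diagonal_mul_diagonal]
      exact congrArg _ (funext hexp2)
    rw [step1, step2, hmid, hdecomp]
    rw [mul_add, add_mul, Matrix.mul_smul, Matrix.smul_mul, hφO, hφOT,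
      ← odo_map_mul, ← odo_map_mul, ← odo_map_mul, ← odo_map_mul, ← hX2, ← hY2]
  set W : Matrix (Fin n) (Fin n) ℂ := Tᴴ * U with hW
  have hWunit : Wᴴ * W = 1 := by
    rw [hW, Matrix.conjTranspose_mul, Matrix.conjTranspose_conjTranspose]
    calc Uᴴ * T * (Tᴴ * U) = Uᴴ * (T * Tᴴ) * U := by simp only [mul_assoc]
      _ = 1 := by rw [hTTH, mul_one, hU]
  have hWT : W * Wᵀ = 1 := by
    have hTHt : (Tᴴ)ᵀ = Tᴴ := by
      have h3 : (Tᴴ)ᵀ = (Tᵀ)ᴴ := by ext i j; simp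
      rw [h3, hTsymm]
    rw [hW, Matrix.transpose_mul, hTHt]
    calc Tᴴ * U * (Uᵀ * Tᴴ) = Tᴴ * (U * Uᵀ) * Tᴴ := by simp only [mul_assoc]
      _ = Tᴴ * (T * T) * Tᴴ := by rw [← hSdef, ← hTT]
      _ = (Tᴴ * T) * (T * Tᴴ) := by simp only [mul_assoc]
      _ = 1 := by rw [hTHT, hTTH, mul_one]
  have hconjmul : ∀ (A B : Matrix (Fin n) (Fin n) ℂ),
      (A * B).map (starRingEnd ℂ) = A.map (starRingEnd ℂ) * B.map (starRingEnd ℂ) := by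
    intro A B
    ext i j
    simp [Matrix.map_apply, Matrix.mul_apply]
  have hWconjT : Wᵀ * W.map (starRingEnd ℂ) = 1 := by
    have h4 : (Wᴴ).map (starRingEnd ℂ) = Wᵀ := by
      ext i j
      simp [Matrix.map_apply, Matrix.conjTranspose_apply]
    calc Wᵀ * W.map (starRingEnd ℂ)
        = (Wᴴ).map (starRingEnd ℂ) * W.map (starRingEnd ℂ) := by rw [h4]
      _ = (Wᴴ * W).map (starRingEnd ℂ) := (hconjmul _ _).symm
      _ = 1 := by
          rw [hWunit]
          ext i j
          simp [Matrix.map_apply, Matrix.one_apply, apply_ite]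
  have hWc : W = W.map (starRingEnd ℂ) := by
    calc W = W * 1 := (mul_one W).symm
      _ = W * (Wᵀ * W.map (starRingEnd ℂ)) := by rw [hWconjT]
      _ = (W * Wᵀ) * W.map (starRingEnd ℂ) := (mul_assoc _ _ _).symm
      _ = W.map (starRingEnd ℂ) := by rw [hWT, one_mul]
  set R : Matrix (Fin n) (Fin n) ℝ := W.map Complex.re with hRdef
  have hRW : W = R.map Complex.ofReal := by
    ext i j
    have h5 := congrFun (congrFun hWc i) j
    simp only [Matrix.map_apply] at h5 ⊢
    exact (Complex.conj_eq_iff_re.mp h5.symm).symm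
  have hRorth : Rᵀ * R = 1 := by
    apply odo_map_injective
    have h6 : (Rᵀ).map Complex.ofReal * R.map Complex.ofReal = Wᴴ * W := by
      rw [← odo_map_conjTranspose, ← hRW]
    rw [odo_map_mul, odo_map_one, h6, hWunit]
  refine ⟨O, Oᵀ * R, θ, hO, ?_, hθmem, ?_⟩
  · rw [Matrix.transpose_mul, Matrix.transpose_transpose]
    calc Rᵀ * O * (Oᵀ * R) = Rᵀ * (O * Oᵀ) * R := by simp only [mul_assoc]
      _ = 1 := by rw [hO', mul_one, hRorth]
  · have hUTW : U = T * W := by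
      rw [hW, ← mul_assoc, hTTH, one_mul]
    rw [hUTW, hT, odo_map_mul, ← hφO, ← hφOT, ← hRW, ← hD]
    simp only [mul_assoc]
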